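/- Let φ be a positive, convex, decreasing function on (0,∞) and F(x) = x/φ(x) strictly increasing. Then the function w(y) := 1/φ(F⁻¹(y)) = y/F⁻¹(y) is concave on the range of F. -/

import Mathlib

open Set

/-- If `φ` is positive, decreasing and convex on `(0, ∞)` and `F(x) = x/φ(x)` is strictly
increasing with inverse `Finv`, then `w(y) = y / F⁻¹(y) = 1/φ(F⁻¹(y))` is concave on the
range of `F`. -/
theorem w_concave (φ : ℝ → ℝ)
    (hpos : ∀ x ∈ Ioi (0:ℝ), 0 < φ x)
    (hdec : AntitoneOn φ (Ioi 0))
    (hconv : ConvexOn ℝ (Ioi 0) φ)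
    (hmono : StrictMonoOn (fun x => x / φ x) (Ioi 0))
    (Finv : ℝ → ℝ)
    (hFinv : ∀ x ∈ Ioi (0:ℝ), Finv (x / φ x) = x) :
    ConcaveOn ℝ ((fun x => x / φ x) '' Ioi 0) (fun y => y / Finv y) := by
  have hφc : ContinuousOn φ (Ioi 0) := hconv.continuousOn isOpen_Ioi
  have hFc : ContinuousOn (fun x => x / φ x) (Ioi 0) :=
    continuousOn_id.div hφc (fun x hx => (hpos x hx).ne')
  have hconvImg : Convex ℝ ((fun x => x / φ x) '' Ioi 0) := by
    rw [convex_iff_ordConnected]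
    exact ((convex_Ioi (0:ℝ)).isPreconnected.image _ hFc).ordConnected
  refine ⟨hconvImg, ?_⟩
  rintro y₁ ⟨x₁, hx₁, rfl⟩ y₂ ⟨x₂, hx₂, rfl⟩ t u ht hu htu
  obtain ⟨x, hx, hxeq⟩ := hconvImg (mem_image_of_mem _ hx₁) (mem_image_of_mem _ hx₂) ht hu htu
  simp only [smul_eq_mul] at hxeq ⊢
  rw [← hxeq, hFinv x hx, hFinv x₁ hx₁, hFinv x₂ hx₂]
  have hp1 : (0:ℝ) < φ x₁ := hpos x₁ hx₁
  have hp2 : (0:ℝ) < φ x₂ := hpos x₂ hx₂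
  have hp : (0:ℝ) < φ x := hpos x hx
  have hx1p : (0:ℝ) < x₁ := hx₁
  have hx2p : (0:ℝ) < x₂ := hx₂
  have hxp : (0:ℝ) < x := hx
  obtain ⟨S, hSdef⟩ : ∃ S : ℝ, S = t / φ x₁ + u / φ x₂ := ⟨_, rfl⟩
  have hS : 0 < S := by
    rcases ht.lt_or_eq with h | h
    · have h1 := div_pos h hp1
      have h2 : 0 ≤ u / φ x₂ := div_nonneg hu hp2.le
      rw [hSdef]; linarith
    · have h2 := div_pos (by linarith : (0:ℝ) < u) hp2
      have h1 : 0 ≤ t / φ x₁ := div_nonneg ht hp1.le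
      rw [hSdef]; linarith
  obtain ⟨s1, hs1def⟩ : ∃ s : ℝ, s = t / (φ x₁ * S) := ⟨_, rfl⟩
  obtain ⟨s2, hs2def⟩ : ∃ s : ℝ, s = u / (φ x₂ * S) := ⟨_, rfl⟩
  have hs1 : 0 ≤ s1 := hs1def ▸ div_nonneg ht (by positivity)
  have hs2 : 0 ≤ s2 := hs2def ▸ div_nonneg hu (by positivity)
  have hsum : s1 + s2 = 1 := by
    rw [hs1def, hs2def, ← div_div, ← div_div, ← add_div, ← hSdef, div_self hS.ne']
  obtain ⟨z, hzdef⟩ : ∃ z : ℝ, z = s1 * x₁ + s2 * x₂ := ⟨_, rfl⟩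
  have hz : z ∈ Ioi (0:ℝ) := by
    have h := (convex_Ioi (0:ℝ)) hx₁ hx₂ hs1 hs2 hsum
    simpa [hzdef, smul_eq_mul] using h
  have hzpos : (0:ℝ) < z := hz
  have hφzpos : 0 < φ z := hpos z hz
  -- convexity bound
  have e1 : s1 * φ x₁ = t / S := by rw [hs1def]; field_simp
  have e2 : s2 * φ x₂ = u / S := by rw [hs2def]; field_simp
  have hφz : φ z ≤ 1 / S := by
    have hcv := hconv.2 hx₁ hx₂ hs1 hs2 hsum
    simp only [smul_eq_mul] at hcv
    rw [e1, e2, ← add_div, htu] at hcv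
    rw [hzdef]; exact hcv
  -- z = (x / φ x) / S
  have e3 : s1 * x₁ = t * (x₁ / φ x₁) / S := by rw [hs1def]; field_simp
  have e4 : s2 * x₂ = u * (x₂ / φ x₂) / S := by rw [hs2def]; field_simp
  have hzx : z = (x / φ x) / S := by
    rw [hzdef, e3, e4, ← add_div, ← hxeq]
  -- F z ≥ F x
  have hFz : x / φ x ≤ z / φ z := by
    have h1 : z / (1 / S) ≤ z / φ z := by gcongr
    have h2 : z / (1 / S) = z * S := by field_simp
    have h3 : z * S = x / φ x := by rw [hzx]; field_simp
    linarith
  have hxz : x ≤ z := by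
    by_contra hlt
    push_neg at hlt
    have := hmono hz hx hlt
    simp only [] at this
    linarith
  -- conclude S * φ x ≤ 1
  have hxval : x / φ x = z * S := by rw [hzx]; field_simp
  have hSc : S * φ x ≤ 1 := by
    have hx' : x = z * S * φ x := by
      have h : x / φ x * φ x = z * S * φ x := by rw [hxval]
      rw [div_mul_cancel₀ _ hp.ne'] at h
      exact h
    nlinarith [hxz, hzpos, hx']
  have l1 : x₁ / φ x₁ / x₁ = 1 / φ x₁ := by
    rw [div_div, mul_comm, ← div_div, div_self hx1p.ne']
  have l2 : x₂ / φ x₂ / x₂ = 1 / φ x₂ := by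
    rw [div_div, mul_comm, ← div_div, div_self hx2p.ne']
  have l3 : x / φ x / x = 1 / φ x := by
    rw [div_div, mul_comm, ← div_div, div_self hxp.ne']
  rw [l1, l2, l3, mul_one_div, mul_one_div]
  rw [← hSdef]
  exact (le_div_iff₀ hp).mpr hSc
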